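/- Let a1,b1,c1,a2,b2,c2 be nonnegative integers and set a3 = n - a1 - a2, b3 = n - b1 - b2, c3 = n - c1 - c2 where a1+b1+c1 = a2+b2+c2 = n. Then for every integer α, the identity a1!·b1!·c1!·C(a2,α)·C(b2,c1-α)·C(c2,b3-α) = a2!·b2!·c2!·C(a1,b3-α)·C(b1,c2-(b3-α))·C(c1,b3-(b3-α)) holds, where C(n,k) denotes the binomial coefficient (taken to be 0 when k<0 or k>n). -/

import Mathlib

/-- Binomial coefficient `C(n, k)` with an integer lower argument, defined to be `0`
when `k < 0` or `k > n`. -/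
def intChoose (n : ℕ) (k : ℤ) : ℤ :=
  if 0 ≤ k then (n.choose k.toNat : ℤ) else 0

lemma intChoose_eq_zero {m : ℕ} {k : ℤ} (h : k < 0 ∨ (m : ℤ) < k) : intChoose m k = 0 := by
  rcases h with h | h
  · simp [intChoose, not_le.mpr h]
  · have h0 : 0 ≤ k := le_trans (Int.ofNat_nonneg m) (le_of_lt h)
    have : m < k.toNat := by omega
    simp [intChoose, h0, Nat.choose_eq_zero_of_lt this]

lemma intChoose_mul (m : ℕ) (k : ℤ) (h0 : 0 ≤ k) (hk : k ≤ m) :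
    intChoose m k * (k.toNat.factorial : ℤ) * ((((m : ℤ) - k).toNat).factorial : ℤ)
      = (m.factorial : ℤ) := by
  lift k to ℕ using h0 with j
  have hj : j ≤ m := by exact_mod_cast hk
  rw [show ((m : ℤ) - (j : ℤ)).toNat = m - j from by omega]
  simp only [intChoose, if_pos (Int.ofNat_nonneg j), Int.toNat_natCast]
  exact_mod_cast Nat.choose_mul_factorial_mul_factorial hj

theorem statement0 (n a1 b1 c1 a2 b2 c2 : ℕ)
    (h1 : a1 + b1 + c1 = n) (h2 : a2 + b2 + c2 = n) (α : ℤ) :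
    (a1.factorial * b1.factorial * c1.factorial : ℤ) *
        intChoose a2 α * intChoose b2 ((c1 : ℤ) - α) *
        intChoose c2 (((n : ℤ) - b1 - b2) - α) =
      (a2.factorial * b2.factorial * c2.factorial : ℤ) *
        intChoose a1 (((n : ℤ) - b1 - b2) - α) *
        intChoose b1 ((c2 : ℤ) - (((n : ℤ) - b1 - b2) - α)) *
        intChoose c1 (((n : ℤ) - b1 - b2) - (((n : ℤ) - b1 - b2) - α)) := by
  have H1 : (a1 : ℤ) + b1 + c1 = n := by exact_mod_cast h1
  have H2 : (a2 : ℤ) + b2 + c2 = n := by exact_mod_cast h2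
  rw [show ((n : ℤ) - b1 - b2) - (((n : ℤ) - b1 - b2) - α) = α from by ring]
  set B : ℤ := (n : ℤ) - b1 - b2 with hB
  rcases lt_or_ge α 0 with h | hα0
  · rw [intChoose_eq_zero (m := a2) (Or.inl h),
      intChoose_eq_zero (m := c1) (Or.inl h)]; ring
  rcases lt_or_ge (a2 : ℤ) α with h | hαa2
  · rw [intChoose_eq_zero (m := a2) (Or.inr h),
      intChoose_eq_zero (m := b1) (k := (c2 : ℤ) - (B - α)) (Or.inr (by omega))]; ring
  rcases lt_or_ge (c1 : ℤ) α with h | hαc1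
  · rw [intChoose_eq_zero (m := b2) (k := (c1 : ℤ) - α) (Or.inl (by omega)),
      intChoose_eq_zero (m := c1) (Or.inr h)]; ring
  rcases lt_or_ge ((b2 : ℤ) + α) (c1 : ℤ) with h | hb2
  · rw [intChoose_eq_zero (m := b2) (k := (c1 : ℤ) - α) (Or.inr (by omega)),
      intChoose_eq_zero (m := a1) (k := B - α) (Or.inr (by omega))]; ring
  rcases lt_or_ge B α with h | hαB
  · rw [intChoose_eq_zero (m := c2) (k := B - α) (Or.inl (by omega)),
      intChoose_eq_zero (m := a1) (k := B - α) (Or.inl (by omega))]; ring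
  rcases lt_or_ge ((c2 : ℤ) + α) B with h | hc2
  · rw [intChoose_eq_zero (m := c2) (k := B - α) (Or.inr (by omega)),
      intChoose_eq_zero (m := b1) (k := (c2 : ℤ) - (B - α)) (Or.inl (by omega))]; ring
  -- main case
  have e1 := intChoose_mul a2 α hα0 hαa2
  have e2 := intChoose_mul b2 ((c1 : ℤ) - α) (by omega) (by omega)
  have e3 := intChoose_mul c2 (B - α) (by omega) (by omega)
  have e4 := intChoose_mul a1 (B - α) (by omega) (by omega)
  have e5 := intChoose_mul b1 ((c2 : ℤ) - (B - α)) (by omega) (by omega)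
  have e6 := intChoose_mul c1 α hα0 hαc1
  rw [show (a1 : ℤ) - (B - α) = (b2 : ℤ) - ((c1 : ℤ) - α) from by omega] at e4
  rw [show (b1 : ℤ) - ((c2 : ℤ) - (B - α)) = (a2 : ℤ) - α from by omega] at e5
  set f1 : ℤ := (α.toNat.factorial : ℤ)
  set f2 : ℤ := ((((a2 : ℤ) - α).toNat).factorial : ℤ)
  set f3 : ℤ := ((((c1 : ℤ) - α).toNat).factorial : ℤ)
  set f4 : ℤ := ((((b2 : ℤ) - ((c1 : ℤ) - α)).toNat).factorial : ℤ)
  set f5 : ℤ := (((B - α).toNat).factorial : ℤ)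
  set f6 : ℤ := ((((c2 : ℤ) - (B - α)).toNat).factorial : ℤ)
  -- e6 second/third factorials: α.toNat and ((c1:ℤ)-α).toNat = f1, f3
  have hD : f1 * f2 * f3 * f4 * f5 * f6 ≠ 0 := by
    have := Nat.factorial_pos α.toNat
    positivity
  refine mul_right_cancel₀ hD ?_
  calc ((a1.factorial * b1.factorial * c1.factorial : ℤ) *
        intChoose a2 α * intChoose b2 ((c1 : ℤ) - α) * intChoose c2 (B - α)) *
        (f1 * f2 * f3 * f4 * f5 * f6)
      = (a1.factorial * b1.factorial * c1.factorial : ℤ) *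
        (intChoose a2 α * f1 * f2) * (intChoose b2 ((c1 : ℤ) - α) * f3 * f4) *
        (intChoose c2 (B - α) * f5 * f6) := by ring
    _ = (a1.factorial * b1.factorial * c1.factorial : ℤ) *
        (a2.factorial : ℤ) * (b2.factorial : ℤ) * (c2.factorial : ℤ) := by
        rw [e1, e2, e3]
    _ = (a2.factorial * b2.factorial * c2.factorial : ℤ) *
        (a1.factorial : ℤ) * (b1.factorial : ℤ) * (c1.factorial : ℤ) := by ring
    _ = (a2.factorial * b2.factorial * c2.factorial : ℤ) *
        (intChoose a1 (B - α) * f5 * f4) *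
        (intChoose b1 ((c2 : ℤ) - (B - α)) * f6 * f2) *
        (intChoose c1 α * f1 * f3) := by rw [e4, e5, e6]
    _ = ((a2.factorial * b2.factorial * c2.factorial : ℤ) *
        intChoose a1 (B - α) * intChoose b1 ((c2 : ℤ) - (B - α)) * intChoose c1 α) *
        (f1 * f2 * f3 * f4 * f5 * f6) := by ring
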